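/- For every μ : {0,…,d} → ℤ with Σ_{k=0}^d μ(k) = 0 there exists exactly one family (n_{ij}) of nonnegative integers, indexed by the ordered pairs (i,j) with i ≠ j and i, j ∈ {0,…,d}, such that: (a) μ(k) = Σ_{j≠k} n_{kj} − Σ_{i≠k} n_{ik} for all k; (b) {i : n_{ij} > 0 for some j} ∩ {j : n_{ij} > 0 for some i} = ∅; and (c) any two elements (i,j) and (i′,j′) of the support {(i,j) : n_{ij} > 0} satisfy (i ≤ i′ and j ≤ j′) or (i′ ≤ i and j′ ≤ j). -/

import Mathlib

open Finset

section STAux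

variable {d : ℕ}

private def STpos (μ : Fin (d+1) → ℤ) (k : ℕ) : ℕ :=
  if h : k < d+1 then (μ ⟨k, h⟩).toNat else 0

private def STneg (μ : Fin (d+1) → ℤ) (k : ℕ) : ℕ :=
  if h : k < d+1 then (-μ ⟨k, h⟩).toNat else 0

private lemma STpos_val (μ : Fin (d+1) → ℤ) (k : Fin (d+1)) :
    STpos μ (k : ℕ) = (μ k).toNat := by
  rw [STpos, dif_pos k.isLt]

private lemma STneg_val (μ : Fin (d+1) → ℤ) (k : Fin (d+1)) :
    STneg μ (k : ℕ) = (-μ k).toNat := by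
  rw [STneg, dif_pos k.isLt]

private lemma ico_disj {a b a' b' : ℕ} (h : b ≤ a') :
    Disjoint (Ico a b) (Ico a' b') := by
  rw [Finset.disjoint_left]
  intro x hx hx'
  simp only [mem_Ico] at hx hx'
  omega

private lemma sum_range_mono (c : ℕ → ℕ) {a b : ℕ} (h : a ≤ b) :
    ∑ t ∈ range a, c t ≤ ∑ t ∈ range b, c t :=
  sum_le_sum_of_subset (range_subset_range.2 h)

private lemma B_disj (c' : ℕ → ℕ) {j j' : ℕ} (hne : j ≠ j') :
    Disjoint (Ico (∑ t ∈ range j, c' t) (∑ t ∈ range (j+1), c' t))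
             (Ico (∑ t ∈ range j', c' t) (∑ t ∈ range (j'+1), c' t)) := by
  rcases Nat.lt_or_ge j j' with h | h
  · exact ico_disj (sum_range_mono c' h)
  · have hlt : j' < j := lt_of_le_of_ne h (Ne.symm hne)
    exact (ico_disj (sum_range_mono c' hlt)).symm

private lemma cover (c : ℕ → ℕ) (M : ℕ) :
    (range M).biUnion (fun l => Ico (∑ t ∈ range l, c t) (∑ t ∈ range (l+1), c t))
      = range (∑ t ∈ range M, c t) := by
  induction M with
  | zero => simp
  | succ M ih =>
    rw [range_add_one, biUnion_insert, ih, sum_range_succ]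
    ext x
    simp only [mem_union, mem_Ico, mem_range]
    have h1 : ∑ t ∈ insert M (range M), c t = ∑ t ∈ range M, c t + c M := by
      rw [← range_add_one, sum_range_succ]
    omega

private lemma gen_rowsum (c c' : ℕ → ℕ) (M : ℕ)
    (htot : ∑ t ∈ range M, c t ≤ ∑ t ∈ range M, c' t)
    {i : ℕ} (hi : i < M) :
    ∑ j ∈ range M, ((Ico (∑ t ∈ range i, c t) (∑ t ∈ range (i+1), c t)) ∩
      (Ico (∑ t ∈ range j, c' t) (∑ t ∈ range (j+1), c' t))).card = c i := by
  set A := Ico (∑ t ∈ range i, c t) (∑ t ∈ range (i+1), c t) with hA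
  rw [← card_biUnion (fun j _ j' _ hne =>
    Disjoint.mono inter_subset_right inter_subset_right (B_disj c' hne))]
  have hU : (range M).biUnion
      (fun j => A ∩ Ico (∑ t ∈ range j, c' t) (∑ t ∈ range (j+1), c' t)) = A := by
    ext x
    simp only [mem_biUnion, mem_inter, mem_range]
    constructor
    · rintro ⟨j, _, hx, _⟩; exact hx
    · intro hx
      have hx2 : x < ∑ t ∈ range (i+1), c t := (mem_Ico.mp hx).2
      have h2 : ∑ t ∈ range (i+1), c t ≤ ∑ t ∈ range M, c t := sum_range_mono c hi
      have hx' : x ∈ range (∑ t ∈ range M, c' t) := by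
        rw [mem_range]; omega
      rw [← cover c' M, mem_biUnion] at hx'
      obtain ⟨j, hj, hxj⟩ := hx'
      exact ⟨j, mem_range.mp hj, hx, hxj⟩
  rw [hU, hA, Nat.card_Ico, sum_range_succ]
  omega

private def STn (μ : Fin (d+1) → ℤ) (i j : ℕ) : ℕ :=
  ((Ico (∑ t ∈ range i, STpos μ t) (∑ t ∈ range (i+1), STpos μ t)) ∩
    (Ico (∑ t ∈ range j, STneg μ t) (∑ t ∈ range (j+1), STneg μ t))).card

private lemma ST_total (μ : Fin (d+1) → ℤ) (hsum : ∑ k, μ k = 0) :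
    ∑ t ∈ range (d+1), STpos μ t = ∑ t ∈ range (d+1), STneg μ t := by
  have h : ∑ t ∈ range (d+1), ((STpos μ t : ℤ) - (STneg μ t : ℤ)) = 0 := by
    rw [← Fin.sum_univ_eq_sum_range (fun t => ((STpos μ t : ℤ) - (STneg μ t : ℤ)))]
    rw [← hsum]
    refine Finset.sum_congr rfl fun k _ => ?_
    rw [STpos_val, STneg_val]
    omega
  rw [Finset.sum_sub_distrib] at h
  have h1 : ((∑ t ∈ range (d+1), STpos μ t : ℕ) : ℤ)
      = ∑ t ∈ range (d+1), (STpos μ t : ℤ) := Nat.cast_sum _ _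
  have h2 : ((∑ t ∈ range (d+1), STneg μ t : ℕ) : ℤ)
      = ∑ t ∈ range (d+1), (STneg μ t : ℤ) := Nat.cast_sum _ _
  omega

private lemma STn_diag (μ : Fin (d+1) → ℤ) (k : ℕ) : STn μ k k = 0 := by
  rw [STn, card_eq_zero, eq_empty_iff_forall_notMem]
  intro x hx
  simp only [mem_inter, mem_Ico] at hx
  have h1 := sum_range_succ (STpos μ) k
  have h2 := sum_range_succ (STneg μ) k
  have hp : 0 < STpos μ k := by omega
  have hn : 0 < STneg μ k := by omega
  rw [STpos] at hp
  rw [STneg] at hn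
  split_ifs at hp hn with h
  · omega
  · omega

private lemma STn_support (μ : Fin (d+1) → ℤ) {i j : ℕ} (h : 0 < STn μ i j) :
    0 < STpos μ i ∧ 0 < STneg μ j := by
  rw [STn, card_pos] at h
  obtain ⟨x, hx⟩ := h
  simp only [mem_inter, mem_Ico] at hx
  have h1 := sum_range_succ (STpos μ) i
  have h2 := sum_range_succ (STneg μ) j
  omega

private lemma STn_rowsum (μ : Fin (d+1) → ℤ) (hsum : ∑ k, μ k = 0) (i : Fin (d+1)) :
    ∑ j : Fin (d+1), STn μ (i : ℕ) (j : ℕ) = (μ i).toNat := by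
  rw [Fin.sum_univ_eq_sum_range (fun j => STn μ (i : ℕ) j)]
  have := gen_rowsum (STpos μ) (STneg μ) (d+1) (le_of_eq (ST_total μ hsum)) i.isLt
  rw [← STpos_val μ i]
  exact this

private lemma STn_colsum (μ : Fin (d+1) → ℤ) (hsum : ∑ k, μ k = 0) (j : Fin (d+1)) :
    ∑ i : Fin (d+1), STn μ (i : ℕ) (j : ℕ) = (-μ j).toNat := by
  have hswap : ∀ i : ℕ, STn μ i (j : ℕ) =
      ((Ico (∑ t ∈ range (j:ℕ), STneg μ t) (∑ t ∈ range ((j:ℕ)+1), STneg μ t)) ∩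
        (Ico (∑ t ∈ range i, STpos μ t) (∑ t ∈ range (i+1), STpos μ t))).card := by
    intro i; rw [STn, inter_comm]
  simp only [hswap]
  rw [Fin.sum_univ_eq_sum_range (fun i =>
      ((Ico (∑ t ∈ range (j:ℕ), STneg μ t) (∑ t ∈ range ((j:ℕ)+1), STneg μ t)) ∩
        (Ico (∑ t ∈ range i, STpos μ t) (∑ t ∈ range (i+1), STpos μ t))).card)]
  have := gen_rowsum (STneg μ) (STpos μ) (d+1) (le_of_eq (ST_total μ hsum).symm) j.isLt
  rw [← STneg_val μ j]
  exact this

private lemma STn_chain_aux (μ : Fin (d+1) → ℤ) {i j i' j' : ℕ} (hii : i < i')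
    (h1 : 0 < STn μ i j) (h2 : 0 < STn μ i' j') : j ≤ j' := by
  rw [STn, card_pos] at h1 h2
  obtain ⟨x, hx⟩ := h1
  obtain ⟨y, hy⟩ := h2
  simp only [mem_inter, mem_Ico] at hx hy
  have m1 : ∑ t ∈ range (i+1), STpos μ t ≤ ∑ t ∈ range i', STpos μ t :=
    sum_range_mono _ hii
  by_contra hjj
  push_neg at hjj
  have m2 : ∑ t ∈ range (j'+1), STneg μ t ≤ ∑ t ∈ range j, STneg μ t :=
    sum_range_mono _ hjj
  omega

private lemma cond_sums (μ : Fin (d+1) → ℤ) (m : Fin (d+1) → Fin (d+1) → ℕ)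
    (hdiag : ∀ i, m i i = 0)
    (hwt : ∀ k, μ k = (∑ j ∈ Finset.univ.filter (fun j => j ≠ k), (m k j : ℤ)) -
          ∑ i ∈ Finset.univ.filter (fun i => i ≠ k), (m i k : ℤ))
    (hdisj : ({i | ∃ j, j ≠ i ∧ 0 < m i j} ∩ {j | ∃ i, i ≠ j ∧ 0 < m i j}
        = (∅ : Set (Fin (d+1)))))
    (k : Fin (d+1)) :
    ∑ j, m k j = (μ k).toNat ∧ ∑ i, m i k = (-μ k).toNat := by
  have hw : μ k = (∑ j, (m k j : ℤ)) - ∑ i, (m i k : ℤ) := by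
    have e1 : ∑ j ∈ univ.erase k, (m k j : ℤ) = ∑ j, (m k j : ℤ) :=
      Finset.sum_erase _ (by simp [hdiag k])
    have e2 : ∑ i ∈ univ.erase k, (m i k : ℤ) = ∑ i, (m i k : ℤ) :=
      Finset.sum_erase _ (by simp [hdiag k])
    rw [hwt k, filter_ne', e1, e2]
  have hnot : ¬ ((∃ j, j ≠ k ∧ 0 < m k j) ∧ (∃ i, i ≠ k ∧ 0 < m i k)) := by
    rintro ⟨h1, h2⟩
    have hk : k ∈ ({i | ∃ j, j ≠ i ∧ 0 < m i j} ∩ {j | ∃ i, i ≠ j ∧ 0 < m i j}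
        : Set (Fin (d+1))) := ⟨h1, h2⟩
    rw [hdisj] at hk
    exact hk
  rw [← Nat.cast_sum, ← Nat.cast_sum] at hw
  by_cases hrow : ∃ j, j ≠ k ∧ 0 < m k j
  · have hc : ∀ i, m i k = 0 := by
      intro i
      by_cases hik : i = k
      · subst hik; exact hdiag i
      · by_contra hne
        exact hnot ⟨hrow, ⟨i, hik, Nat.pos_of_ne_zero hne⟩⟩
    have hcz : ∑ i, m i k = 0 := Finset.sum_eq_zero fun i _ => hc i
    rw [hcz] at hw ⊢
    omega
  · have hc : ∀ j, m k j = 0 := by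
      intro j
      by_cases hjk : j = k
      · subst hjk; exact hdiag j
      · by_contra hne
        exact hrow ⟨j, hjk, Nat.pos_of_ne_zero hne⟩
    have hcz : ∑ j, m k j = 0 := Finset.sum_eq_zero fun j _ => hc j
    rw [hcz] at hw ⊢
    omega

private lemma rect (m : Fin (d+1) → Fin (d+1) → ℕ) (r c : Fin (d+1) → ℕ)
    (hdiag : ∀ i, m i i = 0)
    (hchain : ∀ i j i' j' : Fin (d+1), i ≠ j → i' ≠ j' → 0 < m i j → 0 < m i' j' →
        (i ≤ i' ∧ j ≤ j') ∨ (i' ≤ i ∧ j' ≤ j))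
    (hrow : ∀ i, ∑ j, m i j = r i) (hcol : ∀ j, ∑ i, m i j = c j)
    (a b : Fin (d+1)) :
    ∑ p ∈ Iic a ×ˢ Iic b, m p.1 p.2 = min (∑ i ∈ Iic a, r i) (∑ j ∈ Iic b, c j) := by
  have le1 : ∑ p ∈ Iic a ×ˢ Iic b, m p.1 p.2 ≤ ∑ i ∈ Iic a, r i := by
    rw [Finset.sum_product]
    refine sum_le_sum fun i _ => ?_
    rw [← hrow i]
    exact sum_le_sum_of_subset (subset_univ _)
  have le2 : ∑ p ∈ Iic a ×ˢ Iic b, m p.1 p.2 ≤ ∑ j ∈ Iic b, c j := by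
    rw [Finset.sum_product_right]
    refine sum_le_sum fun j _ => ?_
    rw [← hcol j]
    exact sum_le_sum_of_subset (subset_univ _)
  refine le_antisymm (le_min le1 le2) ?_
  by_contra hlt
  push_neg at hlt
  have hlt1 : ∑ p ∈ Iic a ×ˢ Iic b, m p.1 p.2 < ∑ i ∈ Iic a, r i :=
    lt_of_lt_of_le hlt (min_le_left _ _)
  have hlt2 : ∑ p ∈ Iic a ×ˢ Iic b, m p.1 p.2 < ∑ j ∈ Iic b, c j :=
    lt_of_lt_of_le hlt (min_le_right _ _)
  obtain ⟨i, hia, j, hjb, hij⟩ : ∃ i, i ≤ a ∧ ∃ j, ¬ j ≤ b ∧ 0 < m i j := by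
    by_contra hno
    push_neg at hno
    have heq : ∀ i ∈ Iic a, r i = ∑ j ∈ Iic b, m i j := by
      intro i hi
      have hz : ∑ j ∈ univ \ Iic b, m i j = 0 := by
        refine Finset.sum_eq_zero fun j hj => ?_
        have hb : b < j := not_le.mp fun h => (mem_sdiff.mp hj).2 (mem_Iic.mpr h)
        have := hno i (mem_Iic.mp hi) j
        omega
      rw [← hrow i, ← Finset.sum_sdiff (subset_univ (Iic b)), hz, zero_add]
    have : ∑ i ∈ Iic a, r i = ∑ p ∈ Iic a ×ˢ Iic b, m p.1 p.2 := by
      rw [Finset.sum_product]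
      exact Finset.sum_congr rfl heq
    omega
  obtain ⟨j', hj'b, i', hi'a, hij'⟩ : ∃ j', j' ≤ b ∧ ∃ i', ¬ i' ≤ a ∧ 0 < m i' j' := by
    by_contra hno
    push_neg at hno
    have heq : ∀ j ∈ Iic b, c j = ∑ i ∈ Iic a, m i j := by
      intro j hj
      have hz : ∑ i ∈ univ \ Iic a, m i j = 0 := by
        refine Finset.sum_eq_zero fun i hi => ?_
        have ha : a < i := not_le.mp fun h => (mem_sdiff.mp hi).2 (mem_Iic.mpr h)
        have := hno j (mem_Iic.mp hj) i
        omega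
      rw [← hcol j, ← Finset.sum_sdiff (subset_univ (Iic a)), hz, zero_add]
    have : ∑ j ∈ Iic b, c j = ∑ p ∈ Iic a ×ˢ Iic b, m p.1 p.2 := by
      rw [Finset.sum_product_right]
      exact Finset.sum_congr rfl heq
    omega
  have hij_ne : i ≠ j := by
    intro h; subst h; rw [hdiag] at hij; exact lt_irrefl 0 hij
  have hij'_ne : i' ≠ j' := by
    intro h; subst h; rw [hdiag] at hij'; exact lt_irrefl 0 hij'
  rcases hchain i j i' j' hij_ne hij'_ne hij hij' with ⟨h1, h2⟩ | ⟨h1, h2⟩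
  · exact hjb (h2.trans hj'b)
  · exact hi'a (h1.trans hia)

private lemma eq_of_rect (m n : Fin (d+1) → Fin (d+1) → ℕ)
    (h : ∀ a b : Fin (d+1), ∑ p ∈ Iic a ×ˢ Iic b, m p.1 p.2
        = ∑ p ∈ Iic a ×ˢ Iic b, n p.1 p.2) :
    m = n := by
  have key : ∀ K : ℕ, ∀ i j : Fin (d+1), (i : ℕ) + (j : ℕ) < K → m i j = n i j := by
    intro K
    induction K with
    | zero => intro i j h; omega
    | succ K ih =>
      intro i j hK
      have hmem : (i, j) ∈ Iic i ×ˢ Iic j := by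
        simp [Finset.mem_product]
      have h1 := h i j
      rw [← Finset.sum_erase_add _ _ hmem, ← Finset.sum_erase_add _ _ hmem] at h1
      have hm' : m (i, j).1 (i, j).2 = m i j := rfl
      have hn' : n (i, j).1 (i, j).2 = n i j := rfl
      rw [hm', hn'] at h1
      have h2 : ∑ p ∈ (Iic i ×ˢ Iic j).erase (i, j), m p.1 p.2
          = ∑ p ∈ (Iic i ×ˢ Iic j).erase (i, j), n p.1 p.2 := by
        refine Finset.sum_congr rfl fun p hp => ?_
        have hp' := Finset.mem_erase.mp hp
        have hp1 : (p.1 : ℕ) ≤ (i : ℕ) :=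
          Fin.le_def.mp (mem_Iic.mp (Finset.mem_product.mp hp'.2).1)
        have hp2 : (p.2 : ℕ) ≤ (j : ℕ) :=
          Fin.le_def.mp (mem_Iic.mp (Finset.mem_product.mp hp'.2).2)
        have hne : (p.1 : ℕ) ≠ (i : ℕ) ∨ (p.2 : ℕ) ≠ (j : ℕ) := by
          by_contra hc
          push_neg at hc
          exact hp'.1 (Prod.ext (Fin.val_injective hc.1) (Fin.val_injective hc.2))
        exact ih p.1 p.2 (by omega)
      omega
  funext i j
  exact key ((i : ℕ) + (j : ℕ) + 1) i j (Nat.lt_succ_self _)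

end STAux

/-- For every μ : {0,…,d} → ℤ summing to 0 there is exactly one family
(n_{ij})_{i≠j} of nonnegative integers of weight μ which is "sorted": the sets of
first and of second indices of its support are disjoint, and the support is a chain
for the componentwise order. -/
theorem stmt_2 (d : ℕ) (hd : 1 ≤ d) (μ : Fin (d+1) → ℤ)
    (hsum : ∑ k, μ k = 0) :
    ∃! n : Fin (d+1) → Fin (d+1) → ℕ,
      (∀ i, n i i = 0) ∧
      (∀ k, μ k = (∑ j ∈ Finset.univ.filter (fun j => j ≠ k), (n k j : ℤ)) -
          ∑ i ∈ Finset.univ.filter (fun i => i ≠ k), (n i k : ℤ)) ∧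
      ({i | ∃ j, j ≠ i ∧ 0 < n i j} ∩ {j | ∃ i, i ≠ j ∧ 0 < n i j}
        = (∅ : Set (Fin (d+1)))) ∧
      (∀ i j i' j' : Fin (d+1), i ≠ j → i' ≠ j' → 0 < n i j → 0 < n i' j' →
        (i ≤ i' ∧ j ≤ j') ∨ (i' ≤ i ∧ j' ≤ j)) := by
  set N : Fin (d+1) → Fin (d+1) → ℕ := fun i j => STn μ (i : ℕ) (j : ℕ) with hN
  have c1 : ∀ i, N i i = 0 := fun i => STn_diag μ (i : ℕ)
  have c2 : ∀ k, μ k = (∑ j ∈ Finset.univ.filter (fun j => j ≠ k), (N k j : ℤ)) -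
      ∑ i ∈ Finset.univ.filter (fun i => i ≠ k), (N i k : ℤ) := by
    intro k
    have e1 : ∑ j ∈ univ.erase k, (N k j : ℤ) = ∑ j, (N k j : ℤ) :=
      Finset.sum_erase _ (by simp [c1 k])
    have e2 : ∑ i ∈ univ.erase k, (N i k : ℤ) = ∑ i, (N i k : ℤ) :=
      Finset.sum_erase _ (by simp [c1 k])
    rw [filter_ne', e1, e2, ← Nat.cast_sum, ← Nat.cast_sum]
    have h1 : ∑ j, N k j = (μ k).toNat := STn_rowsum μ hsum k
    have h2 : ∑ i, N i k = (-μ k).toNat := STn_colsum μ hsum k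
    rw [h1, h2]
    omega
  have c3 : ({i | ∃ j, j ≠ i ∧ 0 < N i j} ∩ {j | ∃ i, i ≠ j ∧ 0 < N i j}
      = (∅ : Set (Fin (d+1)))) := by
    rw [Set.eq_empty_iff_forall_notMem]
    rintro k ⟨⟨j, _, hj⟩, ⟨i, _, hi⟩⟩
    have hp := (STn_support μ hj).1
    have hn := (STn_support μ hi).2
    rw [STpos_val] at hp
    rw [STneg_val] at hn
    omega
  have c4 : ∀ i j i' j' : Fin (d+1), i ≠ j → i' ≠ j' → 0 < N i j → 0 < N i' j' →
      (i ≤ i' ∧ j ≤ j') ∨ (i' ≤ i ∧ j' ≤ j) := by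
    intro i j i' j' _ _ h h'
    rcases Nat.lt_trichotomy (i : ℕ) (i' : ℕ) with hlt | heq | hgt
    · exact Or.inl ⟨Fin.le_def.mpr (le_of_lt hlt),
        Fin.le_def.mpr (STn_chain_aux μ hlt h h')⟩
    · have : i = i' := Fin.val_injective heq
      subst this
      rcases le_total j j' with hj | hj
      · exact Or.inl ⟨le_refl i, hj⟩
      · exact Or.inr ⟨le_refl i, hj⟩
    · exact Or.inr ⟨Fin.le_def.mpr (le_of_lt hgt),
        Fin.le_def.mpr (STn_chain_aux μ hgt h' h)⟩
  refine ⟨N, ⟨c1, c2, c3, c4⟩, ?_⟩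
  rintro m ⟨hm1, hm2, hm3, hm4⟩
  have hms := cond_sums μ m hm1 hm2 hm3
  have hns := cond_sums μ N c1 c2 c3
  have hrm := rect m (fun k => (μ k).toNat) (fun k => (-μ k).toNat) hm1 hm4
    (fun i => (hms i).1) (fun j => (hms j).2)
  have hrn := rect N (fun k => (μ k).toNat) (fun k => (-μ k).toNat) c1 c4
    (fun i => (hns i).1) (fun j => (hns j).2)
  exact eq_of_rect m N (fun a b => (hrm a b).trans (hrn a b).symm)
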